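/- The generating set {f_{0,1,0}, f_{0,2,0}, f_{1,2,0}} is minimal: there do not exist symmetric polynomials s, t ∈ K[x_1,x_2,x_3] such that f_{0,1,0} = L(s)·f_{0,2,0} + L(t)·f_{1,2,0}; there do not exist symmetric s, t with f_{0,2,0} = L(s)·f_{0,1,0} + L(t)·f_{1,2,0}; and there do not exist symmetric s, t with f_{1,2,0} = L(s)·f_{0,1,0} + L(t)·f_{0,2,0}. -/

import Mathlib

/-- The Grassmann relation on the free algebra on three generators. -/
def GrassRel3 (K : Type*) [Field K] (x y : FreeAlgebra K (Fin 3)) : Prop :=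
  ∃ a b c : FreeAlgebra K (Fin 3), x = (a * b - b * a) * c - c * (a * b - b * a) ∧ y = 0

/-- The relatively free algebra of rank 3 in the variety generated by Grassmann algebras. -/
abbrev F3 (K : Type*) [Field K] := RingQuot (GrassRel3 K)

/-- The generators of `F3`. -/
noncomputable def X3 (K : Type*) [Field K] (i : Fin 3) : F3 K :=
  RingQuot.mkAlgHom K (GrassRel3 K) (FreeAlgebra.ι K i)

/-- The `K`-linear substitution map `K[x₁,x₂,x₃] → F3` sending each monomial
`x₁^a x₂^b x₃^c` to the ordered product `x₁^a x₂^b x₃^c` in `F3`. -/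
noncomputable def L3 (K : Type*) [Field K] (p : MvPolynomial (Fin 3) K) : F3 K :=
  p.support.sum fun m =>
    p.coeff m • (X3 K 0 ^ m 0 * X3 K 1 ^ m 1 * X3 K 2 ^ m 2)

/-- The elements `f_{a,b,c}` of `F3`. -/
noncomputable def fgen (K : Type*) [Field K] (a b c : ℕ) : F3 K :=
  (X3 K 0 ^ a * X3 K 1 ^ b - X3 K 0 ^ b * X3 K 1 ^ a) * X3 K 2 ^ c *
      (X3 K 1 * X3 K 0 - X3 K 0 * X3 K 1)
    + (X3 K 0 ^ a * X3 K 2 ^ b - X3 K 0 ^ b * X3 K 2 ^ a) * X3 K 1 ^ c *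
      (X3 K 2 * X3 K 0 - X3 K 0 * X3 K 2)
    + (X3 K 1 ^ a * X3 K 2 ^ b - X3 K 1 ^ b * X3 K 2 ^ a) * X3 K 0 ^ c *
      (X3 K 2 * X3 K 1 - X3 K 1 * X3 K 2)

section Aux


open Matrix

variable {K : Type*} [Field K]

/-- entry predicate: upper triangular with constant diagonal -/
def UT (M : Matrix (Fin 3) (Fin 3) K) : Prop :=
  M 1 0 = 0 ∧ M 2 0 = 0 ∧ M 2 1 = 0 ∧ M 1 1 = M 0 0 ∧ M 2 2 = M 0 0

noncomputable def Emat : Matrix (Fin 3) (Fin 3) K := Matrix.single 0 2 1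

lemma UT_one : UT (1 : Matrix (Fin 3) (Fin 3) K) := by
  refine ⟨?_, ?_, ?_, ?_, ?_⟩ <;> simp [Matrix.one_apply]

lemma UT_algebraMap (r : K) : UT (algebraMap K (Matrix (Fin 3) (Fin 3) K) r) := by
  refine ⟨?_, ?_, ?_, ?_, ?_⟩ <;>
    simp [Matrix.algebraMap_eq_diagonal, Matrix.diagonal_apply]

lemma UT_add {M N : Matrix (Fin 3) (Fin 3) K} (hM : UT M) (hN : UT N) : UT (M + N) := by
  obtain ⟨a1,a2,a3,a4,a5⟩ := hM
  obtain ⟨b1,b2,b3,b4,b5⟩ := hN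
  refine ⟨?_, ?_, ?_, ?_, ?_⟩ <;> simp [Matrix.add_apply, *]

lemma UT_mul {M N : Matrix (Fin 3) (Fin 3) K} (hM : UT M) (hN : UT N) : UT (M * N) := by
  obtain ⟨a1,a2,a3,a4,a5⟩ := hM
  obtain ⟨b1,b2,b3,b4,b5⟩ := hN
  refine ⟨?_, ?_, ?_, ?_, ?_⟩ <;>
    simp [Matrix.mul_apply, Fin.sum_univ_three, *] <;> ring

lemma mul00 {M N : Matrix (Fin 3) (Fin 3) K} (hM : UT M) (hN : UT N) :
    (M * N) 0 0 = M 0 0 * N 0 0 := by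
  obtain ⟨a1,a2,a3,a4,a5⟩ := hM
  obtain ⟨b1,b2,b3,b4,b5⟩ := hN
  simp [Matrix.mul_apply, Fin.sum_univ_three, *]

lemma UT_pow {M : Matrix (Fin 3) (Fin 3) K} (hM : UT M) (n : ℕ) : UT (M ^ n) := by
  induction n with
  | zero => simpa using UT_one
  | succ n ih => rw [pow_succ]; exact UT_mul ih hM

lemma pow00 {M : Matrix (Fin 3) (Fin 3) K} (hM : UT M) (n : ℕ) :
    (M ^ n) 0 0 = M 0 0 ^ n := by
  induction n with
  | zero => simp [Matrix.one_apply]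
  | succ n ih => rw [pow_succ, pow_succ, mul00 (UT_pow hM n) hM, ih]

lemma comm_eq {M N : Matrix (Fin 3) (Fin 3) K} (hM : UT M) (hN : UT N) :
    M * N - N * M = (M 0 1 * N 1 2 - N 0 1 * M 1 2) • Emat := by
  obtain ⟨a1,a2,a3,a4,a5⟩ := hM
  obtain ⟨b1,b2,b3,b4,b5⟩ := hN
  ext i j
  fin_cases i <;> fin_cases j <;>
    simp [Matrix.mul_apply, Fin.sum_univ_three, Emat, Matrix.single, *] <;> ring

lemma mul_Emat {M : Matrix (Fin 3) (Fin 3) K} (hM : UT M) :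
    M * Emat = M 0 0 • Emat := by
  obtain ⟨a1,a2,a3,a4,a5⟩ := hM
  ext i j
  fin_cases i <;> fin_cases j <;>
    simp [Matrix.mul_apply, Fin.sum_univ_three, Emat, Matrix.single, *]

lemma Emat_mul {M : Matrix (Fin 3) (Fin 3) K} (hM : UT M) :
    Emat * M = M 0 0 • Emat := by
  obtain ⟨a1,a2,a3,a4,a5⟩ := hM
  ext i j
  fin_cases i <;> fin_cases j <;>
    simp [Matrix.mul_apply, Fin.sum_univ_three, Emat, Matrix.single, *]

noncomputable def Tmat (α β γ : Fin 3 → K) (i : Fin 3) : Matrix (Fin 3) (Fin 3) K :=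
  α i • 1 + β i • Matrix.single 0 1 1 + γ i • Matrix.single 1 2 1

lemma UT_Tmat (α β γ : Fin 3 → K) (i : Fin 3) : UT (Tmat α β γ i) := by
  refine ⟨?_, ?_, ?_, ?_, ?_⟩ <;>
    simp [Tmat, Matrix.add_apply, Matrix.smul_apply, Matrix.one_apply, Matrix.single]

lemma Tmat00 (α β γ : Fin 3 → K) (i : Fin 3) : Tmat α β γ i 0 0 = α i := by
  simp [Tmat, Matrix.add_apply, Matrix.smul_apply, Matrix.one_apply, Matrix.single]

lemma Tmat01 (α β γ : Fin 3 → K) (i : Fin 3) : Tmat α β γ i 0 1 = β i := by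
  simp [Tmat, Matrix.add_apply, Matrix.smul_apply, Matrix.one_apply, Matrix.single]

lemma Tmat12 (α β γ : Fin 3 → K) (i : Fin 3) : Tmat α β γ i 1 2 = γ i := by
  simp [Tmat, Matrix.add_apply, Matrix.smul_apply, Matrix.one_apply, Matrix.single]

lemma UT_lift (α β γ : Fin 3 → K) (x : FreeAlgebra K (Fin 3)) :
    UT ((FreeAlgebra.lift K (Tmat α β γ)) x) := by
  induction x using FreeAlgebra.induction with
  | grade0 r => rw [AlgHom.commutes]; exact UT_algebraMap r
  | grade1 i => rw [FreeAlgebra.lift_ι_apply]; exact UT_Tmat α β γ i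
  | mul a b ha hb => rw [_root_.map_mul]; exact UT_mul ha hb
  | add a b ha hb => rw [map_add]; exact UT_add ha hb

lemma lift_rel (α β γ : Fin 3 → K) :
    ∀ ⦃x y : FreeAlgebra K (Fin 3)⦄, GrassRel3 K x y →
      (FreeAlgebra.lift K (Tmat α β γ)) x = (FreeAlgebra.lift K (Tmat α β γ)) y := by
  rintro x y ⟨a, b, c, rfl, rfl⟩
  set f := FreeAlgebra.lift K (Tmat α β γ)
  have ha := UT_lift α β γ a
  have hb := UT_lift α β γ b
  have hc := UT_lift α β γ c
  simp only [map_sub, _root_.map_mul, map_zero]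
  rw [comm_eq ha hb, Matrix.smul_mul, Matrix.mul_smul, Emat_mul hc, mul_Emat hc]
  exact sub_self _

lemma UT_sub {M N : Matrix (Fin 3) (Fin 3) K} (hM : UT M) (hN : UT N) : UT (M - N) := by
  obtain ⟨a1,a2,a3,a4,a5⟩ := hM
  obtain ⟨b1,b2,b3,b4,b5⟩ := hN
  refine ⟨?_, ?_, ?_, ?_, ?_⟩ <;> simp [Matrix.sub_apply, *]

noncomputable def phi (α β γ : Fin 3 → K) : F3 K →ₐ[K] Matrix (Fin 3) (Fin 3) K :=
  RingQuot.liftAlgHom K ⟨FreeAlgebra.lift K (Tmat α β γ), lift_rel α β γ⟩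

lemma phi_X3 (α β γ : Fin 3 → K) (i : Fin 3) : phi α β γ (X3 K i) = Tmat α β γ i := by
  rw [X3, phi, RingQuot.liftAlgHom_mkAlgHom_apply, FreeAlgebra.lift_ι_apply]

lemma UT_phi (α β γ : Fin 3 → K) (z : F3 K) : UT (phi α β γ z) := by
  obtain ⟨x, rfl⟩ := RingQuot.mkAlgHom_surjective K (GrassRel3 K) z
  rw [phi, RingQuot.liftAlgHom_mkAlgHom_apply]
  exact UT_lift α β γ x

def mu (α β γ : Fin 3 → K) (a b : ℕ) : K :=
  (α 0 ^ a * α 1 ^ b - α 0 ^ b * α 1 ^ a) * (β 1 * γ 0 - β 0 * γ 1)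
  + (α 0 ^ a * α 2 ^ b - α 0 ^ b * α 2 ^ a) * (β 2 * γ 0 - β 0 * γ 2)
  + (α 1 ^ a * α 2 ^ b - α 1 ^ b * α 2 ^ a) * (β 2 * γ 1 - β 1 * γ 2)

lemma prodpow00 (α β γ : Fin 3 → K) (a b : ℕ) (i j : Fin 3) :
    (Tmat α β γ i ^ a * Tmat α β γ j ^ b) 0 0 = α i ^ a * α j ^ b := by
  rw [mul00 (UT_pow (UT_Tmat α β γ i) a) (UT_pow (UT_Tmat α β γ j) b),
    pow00 (UT_Tmat α β γ i), pow00 (UT_Tmat α β γ j), Tmat00, Tmat00]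

lemma phi_fgen (α β γ : Fin 3 → K) (a b : ℕ) :
    phi α β γ (fgen K a b 0) = mu α β γ a b • Emat := by
  have h0 := UT_Tmat α β γ 0
  have h1 := UT_Tmat α β γ 1
  have h2 := UT_Tmat α β γ 2
  have hA := UT_sub (UT_mul (UT_pow h0 a) (UT_pow h1 b)) (UT_mul (UT_pow h0 b) (UT_pow h1 a))
  have hB := UT_sub (UT_mul (UT_pow h0 a) (UT_pow h2 b)) (UT_mul (UT_pow h0 b) (UT_pow h2 a))
  have hC := UT_sub (UT_mul (UT_pow h1 a) (UT_pow h2 b)) (UT_mul (UT_pow h1 b) (UT_pow h2 a))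
  rw [fgen]
  simp only [map_add, map_sub, _root_.map_mul, map_pow, phi_X3, pow_zero, mul_one]
  rw [comm_eq h1 h0, comm_eq h2 h0, comm_eq h2 h1,
    Matrix.mul_smul, Matrix.mul_smul, Matrix.mul_smul,
    mul_Emat hA, mul_Emat hB, mul_Emat hC,
    smul_smul, smul_smul, smul_smul, ← add_smul, ← add_smul]
  congr 1
  rw [Matrix.sub_apply, Matrix.sub_apply, Matrix.sub_apply,
    prodpow00, prodpow00, prodpow00, prodpow00, prodpow00, prodpow00,
    Tmat01, Tmat01, Tmat01, Tmat12, Tmat12, Tmat12, mu]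
  ring

lemma phi_L3_00 (α β γ : Fin 3 → K) (p : MvPolynomial (Fin 3) K) :
    phi α β γ (L3 K p) 0 0 = MvPolynomial.eval α p := by
  rw [L3, map_sum, Matrix.sum_apply, MvPolynomial.eval_eq]
  refine Finset.sum_congr rfl fun m _ => ?_
  rw [show (∏ i ∈ m.support, α i ^ m i) = ∏ i : Fin 3, α i ^ m i from
    Finset.prod_subset (Finset.subset_univ _)
      (fun i _ hi => by rw [Finsupp.notMem_support_iff.mp hi, pow_zero])]
  rw [_root_.map_smul, Matrix.smul_apply, _root_.map_mul, _root_.map_mul, map_pow, map_pow,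
    map_pow, phi_X3, phi_X3, phi_X3,
    mul00 (UT_mul (UT_pow (UT_Tmat α β γ 0) _) (UT_pow (UT_Tmat α β γ 1) _))
      (UT_pow (UT_Tmat α β γ 2) _),
    prodpow00, pow00 (UT_Tmat α β γ 2), Tmat00, Fin.prod_univ_three, smul_eq_mul]

lemma key (α β γ : Fin 3 → K) {s t : MvPolynomial (Fin 3) K} {a b a' b' a'' b'' : ℕ}
    (h : fgen K a b 0 = L3 K s * fgen K a' b' 0 + L3 K t * fgen K a'' b'' 0) :
    mu α β γ a b = MvPolynomial.eval α s * mu α β γ a' b'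
      + MvPolynomial.eval α t * mu α β γ a'' b'' := by
  have h2 := congrArg (fun z => phi α β γ z 0 2) h
  simp only [map_add, _root_.map_mul, phi_fgen, Matrix.mul_smul,
    mul_Emat (UT_phi α β γ (L3 K s)), mul_Emat (UT_phi α β γ (L3 K t)),
    phi_L3_00] at h2
  simpa [Emat, Matrix.single, smul_smul, mul_comm] using h2


end Aux

/-- The generating set `{f_{0,1,0}, f_{0,2,0}, f_{1,2,0}}` is minimal: none of the three
elements lies in the module generated by the other two over the symmetric polynomials. -/
theorem symm_commIdeal3_minimal_generators (K : Type*) [Field K] [CharZero K] :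
    (¬ ∃ s t : MvPolynomial (Fin 3) K, s.IsSymmetric ∧ t.IsSymmetric ∧
        fgen K 0 1 0 = L3 K s * fgen K 0 2 0 + L3 K t * fgen K 1 2 0) ∧
      (¬ ∃ s t : MvPolynomial (Fin 3) K, s.IsSymmetric ∧ t.IsSymmetric ∧
        fgen K 0 2 0 = L3 K s * fgen K 0 1 0 + L3 K t * fgen K 1 2 0) ∧
      (¬ ∃ s t : MvPolynomial (Fin 3) K, s.IsSymmetric ∧ t.IsSymmetric ∧
        fgen K 1 2 0 = L3 K s * fgen K 0 1 0 + L3 K t * fgen K 0 2 0) := by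
  refine ⟨?_, ?_, ?_⟩
  · rintro ⟨s, t, -, -, h⟩
    have e1 := key (K := K) ![0,1,2] ![0,1,0] ![1,0,0] h
    have e2 := key (K := K) ![0,1,2] ![0,0,1] ![1,0,0] h
    simp only [mu, Matrix.cons_val_zero, Matrix.cons_val_one, Matrix.cons_val_two, Matrix.head_cons, Matrix.tail_cons] at e1 e2
    norm_num at e1 e2
    rw [← e1] at e2
    norm_num at e2
  · rintro ⟨s, t, -, -, h⟩
    have e1 := key (K := K) ![0,1,2] ![0,1,0] ![1,0,0] h
    have e2 := key (K := K) ![0,1,2] ![0,0,1] ![1,0,0] h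
    simp only [mu, Matrix.cons_val_zero, Matrix.cons_val_one, Matrix.cons_val_two, Matrix.head_cons, Matrix.tail_cons] at e1 e2
    norm_num at e1 e2
    rw [← e1] at e2
    norm_num at e2
  · rintro ⟨s, t, -, -, h⟩
    have e1 := key (K := K) ![0,1,2] ![0,1,0] ![1,0,0] h
    have e2 := key (K := K) ![0,1,2] ![0,0,1] ![1,0,0] h
    have e3 := key (K := K) ![0,1,2] ![0,0,1] ![0,1,0] h
    simp only [mu, Matrix.cons_val_zero, Matrix.cons_val_one, Matrix.cons_val_two, Matrix.head_cons, Matrix.tail_cons] at e1 e2 e3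
    norm_num at e1 e2 e3
    have : (2:K) = 0 := by linear_combination e3 + e1 - e2
    norm_num at this
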